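/- Let V(θ) = ‖θ‖ (Euclidean norm on ℝ^N) and let f_i(θ) = (K/N) Σ_j a_{ij} sin(θ_j - θ_i) be the Kuramoto drift with symmetric nonnegative connected adjacency matrix A and K > 0. Then for all θ with Σᵢ θᵢ = 0, θ ≠ 0, and all components θᵢ ∈ [-δ, δ] with δ ∈ (0, π/2), one has ⟨∇V(θ), f(θ)⟩ ≤ -(K C_δ λ₂ / N)·V(θ), where C_δ = sin(2δ)/(2δ) and λ₂ > 0 is the spectral gap of the Laplacian of A. -/

import Mathlib

open Real Finset Matrix

/-- Chord inequality: for `|x| ≤ 2δ < π`, `(sin(2δ)/(2δ)) x² ≤ x sin x`. -/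
lemma chord_sin_aux (δ : ℝ) (hδ0 : 0 < δ) (hδπ : δ < π / 2) (x : ℝ) (hx : |x| ≤ 2 * δ) :
    (Real.sin (2 * δ) / (2 * δ)) * x ^ 2 ≤ x * Real.sin x := by
  have h2δ : 0 < 2 * δ := by linarith
  have h2δπ : 2 * δ ≤ π := by linarith [Real.pi_pos]
  suffices h : ∀ y : ℝ, 0 ≤ y → y ≤ 2 * δ →
      (Real.sin (2 * δ) / (2 * δ)) * y ^ 2 ≤ y * Real.sin y by
    rcases le_or_gt 0 x with hx0 | hx0
    · exact h x hx0 (by rwa [abs_of_nonneg hx0] at hx)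
    · have h1 := h (-x) (by linarith) (by rwa [abs_of_neg hx0] at hx)
      have hsin : Real.sin (-x) = -Real.sin x := Real.sin_neg x
      nlinarith [h1]
  intro y hy0 hy2
  set t := y / (2 * δ) with ht
  have ht0 : 0 ≤ t := div_nonneg hy0 h2δ.le
  have ht1 : t ≤ 1 := (div_le_one h2δ).mpr hy2
  have hmem0 : (0 : ℝ) ∈ Set.Icc (0 : ℝ) π := ⟨le_refl 0, Real.pi_pos.le⟩
  have hmem2 : (2 * δ) ∈ Set.Icc (0 : ℝ) π := ⟨h2δ.le, h2δπ⟩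
  have key := strictConcaveOn_sin_Icc.concaveOn.2 hmem0 hmem2
      (sub_nonneg.mpr ht1) ht0 (by ring)
  have hyt : (1 - t) • (0 : ℝ) + t • (2 * δ) = y := by
    rw [smul_eq_mul, smul_eq_mul, mul_zero, zero_add, ht]
    field_simp
  rw [hyt] at key
  have key' : t * Real.sin (2 * δ) ≤ Real.sin y := by
    simpa [Real.sin_zero, smul_eq_mul] using key
  have hmul : y * (t * Real.sin (2 * δ)) ≤ y * Real.sin y :=
    mul_le_mul_of_nonneg_left key' hy0
  have heq : (Real.sin (2 * δ) / (2 * δ)) * y ^ 2 = y * (t * Real.sin (2 * δ)) := by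
    rw [ht]; field_simp
  linarith [hmul, heq.le]

theorem kuramoto_lyapunov_decay (N : ℕ) (hN : 2 ≤ N) (K : ℝ) (hK : 0 < K)
    (a : Matrix (Fin N) (Fin N) ℝ)
    (hsym : ∀ i j, a i j = a j i)
    (hnonneg : ∀ i j, i ≠ j → 0 ≤ a i j)
    (L : Matrix (Fin N) (Fin N) ℝ)
    (hLdiag : ∀ i, L i i = ∑ j ∈ Finset.univ.erase i, a i j)
    (hLoff : ∀ i j, i ≠ j → L i j = -a i j)
    (lam₂ : ℝ) (hlampos : 0 < lam₂)
    (hlam : IsLeast {r : ℝ | ∃ θ : Fin N → ℝ, θ ≠ 0 ∧ (∑ i, θ i) = 0 ∧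
      r = (θ ⬝ᵥ (L *ᵥ θ)) / ∑ i, (θ i) ^ 2} lam₂)
    (δ : ℝ) (hδ0 : 0 < δ) (hδπ : δ < π / 2)
    (Cδ : ℝ) (hCδ : Cδ = Real.sin (2 * δ) / (2 * δ))
    (f : (Fin N → ℝ) → Fin N → ℝ)
    (hf : ∀ θ i, f θ i = (K / N) * ∑ j, a i j * Real.sin (θ j - θ i))
    (θ : Fin N → ℝ) (hzero : (∑ i, θ i) = 0) (hne : θ ≠ 0)
    (hbox : ∀ i, θ i ∈ Set.Icc (-δ) δ) :
    ∑ i, (θ i / Real.sqrt (∑ i, (θ i) ^ 2)) * f θ i ≤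
      -(K * Cδ * lam₂ / N) * Real.sqrt (∑ i, (θ i) ^ 2) := by
  have hNpos : (0 : ℝ) < N := by positivity
  have hCpos : 0 < Cδ := by
    rw [hCδ]
    have h2δ : 0 < 2 * δ := by linarith
    have : 0 < Real.sin (2 * δ) :=
      Real.sin_pos_of_pos_of_lt_pi h2δ (by linarith [Real.pi_pos])
    positivity
  -- S = ∑ θᵢ², s = √S
  set S := ∑ i, (θ i) ^ 2 with hSdef
  have hSpos : 0 < S := by
    obtain ⟨i0, hi0⟩ := Function.ne_iff.mp hne
    refine Finset.sum_pos' (fun i _ => sq_nonneg _) ⟨i0, Finset.mem_univ _, ?_⟩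
    have : θ i0 ≠ 0 := hi0
    positivity
  set s := Real.sqrt S with hsdef
  have hspos : 0 < s := Real.sqrt_pos.mpr hSpos
  have hssq : s * s = S := Real.mul_self_sqrt hSpos.le
  -- spectral gap bound
  have hquad : lam₂ * S ≤ θ ⬝ᵥ (L *ᵥ θ) := by
    have hmem : (θ ⬝ᵥ (L *ᵥ θ)) / S ∈ {r : ℝ | ∃ θ' : Fin N → ℝ, θ' ≠ 0 ∧ (∑ i, θ' i) = 0 ∧
        r = (θ' ⬝ᵥ (L *ᵥ θ')) / ∑ i, (θ' i) ^ 2} := ⟨θ, hne, hzero, rfl⟩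
    have hle := hlam.2 hmem
    rw [Set.mem_setOf_eq] at hmem
    rw [le_div_iff₀ hSpos] at hle
    linarith
  -- Laplacian quadratic form identity
  have hQ : θ ⬝ᵥ (L *ᵥ θ) = ∑ i, ∑ j, a i j * (θ i ^ 2 - θ i * θ j) := by
    have step1 : θ ⬝ᵥ (L *ᵥ θ) = ∑ i, ∑ j, θ i * (L i j * θ j) := by
      simp [dotProduct, mulVec, Finset.mul_sum]
    rw [step1]
    refine Finset.sum_congr rfl fun i _ => ?_
    rw [← Finset.add_sum_erase _ (fun j => θ i * (L i j * θ j)) (Finset.mem_univ i),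
        ← Finset.add_sum_erase _ (fun j => a i j * (θ i ^ 2 - θ i * θ j)) (Finset.mem_univ i)]
    have hd : θ i * (L i i * θ i) = ∑ j ∈ Finset.univ.erase i, a i j * θ i ^ 2 := by
      rw [hLdiag i, Finset.sum_mul, Finset.mul_sum]
      exact Finset.sum_congr rfl fun j _ => by ring
    have hoff : ∑ j ∈ Finset.univ.erase i, θ i * (L i j * θ j)
        = ∑ j ∈ Finset.univ.erase i, (-(a i j * (θ i * θ j))) := by
      refine Finset.sum_congr rfl fun j hj => ?_
      rw [hLoff i j (Ne.symm (Finset.ne_of_mem_erase hj))]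
      ring
    rw [hd, hoff, ← Finset.sum_add_distrib]
    have hdiag0 : a i i * (θ i ^ 2 - θ i * θ i) = 0 := by ring
    rw [hdiag0, zero_add]
    exact Finset.sum_congr rfl fun j _ => by ring
  -- symmetrization: ∑∑ a (θi-θj)² = 2 ∑∑ a (θi² - θiθj)
  have hswap : ∑ i, ∑ j, a i j * θ j ^ 2 = ∑ i, ∑ j, a i j * θ i ^ 2 := by
    rw [Finset.sum_comm]
    exact Finset.sum_congr rfl fun i _ => Finset.sum_congr rfl fun j _ => by rw [hsym]
  have hD : ∑ i, ∑ j, a i j * (θ i - θ j) ^ 2 = 2 * (θ ⬝ᵥ (L *ᵥ θ)) := by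
    rw [hQ]
    have expand : ∀ i j : Fin N, a i j * (θ i - θ j) ^ 2
        = 2 * (a i j * (θ i ^ 2 - θ i * θ j)) + (a i j * θ j ^ 2 - a i j * θ i ^ 2) := by
      intro i j; ring
    calc ∑ i, ∑ j, a i j * (θ i - θ j) ^ 2
        = ∑ i, ∑ j, (2 * (a i j * (θ i ^ 2 - θ i * θ j))
            + (a i j * θ j ^ 2 - a i j * θ i ^ 2)) := by
          exact Finset.sum_congr rfl fun i _ => Finset.sum_congr rfl fun j _ => expand i j
      _ = 2 * (∑ i, ∑ j, a i j * (θ i ^ 2 - θ i * θ j))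
            + ((∑ i, ∑ j, a i j * θ j ^ 2) - ∑ i, ∑ j, a i j * θ i ^ 2) := by
          simp [Finset.sum_add_distrib, Finset.sum_sub_distrib, Finset.mul_sum]
      _ = 2 * ∑ i, ∑ j, a i j * (θ i ^ 2 - θ i * θ j) := by rw [hswap]; ring
  -- antisymmetrization of the drift inner product
  set T := ∑ i, ∑ j, a i j * (θ i * Real.sin (θ j - θ i)) with hTdef
  have hTswap : T = ∑ i, ∑ j, a i j * (θ j * Real.sin (θ i - θ j)) := by
    rw [hTdef, Finset.sum_comm]
    exact Finset.sum_congr rfl fun i _ => Finset.sum_congr rfl fun j _ => by rw [hsym]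
  have h2T : 2 * T = -(∑ i, ∑ j, a i j * ((θ i - θ j) * Real.sin (θ i - θ j))) := by
    have : 2 * T = T + T := by ring
    rw [this]
    nth_rewrite 2 [hTswap]
    rw [hTdef, ← Finset.sum_add_distrib, ← Finset.sum_neg_distrib]
    refine Finset.sum_congr rfl fun i _ => ?_
    rw [← Finset.sum_add_distrib, ← Finset.sum_neg_distrib]
    refine Finset.sum_congr rfl fun j _ => ?_
    have hs : Real.sin (θ j - θ i) = -Real.sin (θ i - θ j) := by
      rw [← neg_sub (θ i) (θ j), Real.sin_neg]
    rw [hs]; ring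
  -- chord bound, termwise
  have hchord : ∑ i, ∑ j, Cδ * (a i j * (θ i - θ j) ^ 2)
      ≤ ∑ i, ∑ j, a i j * ((θ i - θ j) * Real.sin (θ i - θ j)) := by
    refine Finset.sum_le_sum fun i _ => Finset.sum_le_sum fun j _ => ?_
    by_cases hij : i = j
    · subst hij; simp
    · have ha := hnonneg i j hij
      have hbi := hbox i; have hbj := hbox j
      have habs : |θ i - θ j| ≤ 2 * δ := by
        rw [abs_le]
        constructor <;> [skip; skip] <;>
          · obtain ⟨h1, h2⟩ := hbi; obtain ⟨h3, h4⟩ := hbj; linarith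
      have hc := chord_sin_aux δ hδ0 hδπ (θ i - θ j) habs
      rw [← hCδ] at hc
      calc Cδ * (a i j * (θ i - θ j) ^ 2) = a i j * (Cδ * (θ i - θ j) ^ 2) := by ring
        _ ≤ a i j * ((θ i - θ j) * Real.sin (θ i - θ j)) :=
            mul_le_mul_of_nonneg_left hc ha
  have hchord' : Cδ * (2 * (θ ⬝ᵥ (L *ᵥ θ))) ≤ -(2 * T) := by
    rw [h2T, neg_neg, ← hD]
    calc Cδ * ∑ i, ∑ j, a i j * (θ i - θ j) ^ 2
        = ∑ i, ∑ j, Cδ * (a i j * (θ i - θ j) ^ 2) := by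
          simp [Finset.mul_sum]
      _ ≤ _ := hchord
  -- P = ∑ θᵢ fᵢ = (K/N) T
  have hP : ∑ i, θ i * f θ i = (K / N) * T := by
    rw [hTdef, Finset.mul_sum]
    refine Finset.sum_congr rfl fun i _ => ?_
    rw [hf θ i, Finset.mul_sum, Finset.mul_sum, Finset.mul_sum]
    exact Finset.sum_congr rfl fun j _ => by ring
  -- main estimate: P ≤ -(K Cδ lam₂ / N) S
  have hmain : ∑ i, θ i * f θ i ≤ -(K * Cδ * lam₂ / N) * S := by
    rw [hP]
    have hT : T ≤ -(Cδ * (θ ⬝ᵥ (L *ᵥ θ))) := by linarith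
    have hKN : 0 < K / N := by positivity
    have h1 : (K / N) * T ≤ (K / N) * (-(Cδ * (θ ⬝ᵥ (L *ᵥ θ)))) :=
      mul_le_mul_of_nonneg_left hT hKN.le
    have h2 : Cδ * (lam₂ * S) ≤ Cδ * (θ ⬝ᵥ (L *ᵥ θ)) :=
      mul_le_mul_of_nonneg_left hquad hCpos.le
    have h3 : (K / N) * (-(Cδ * (θ ⬝ᵥ (L *ᵥ θ)))) ≤ (K / N) * (-(Cδ * (lam₂ * S))) := by
      have := neg_le_neg h2
      exact mul_le_mul_of_nonneg_left this hKN.le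
    calc (K / N) * T ≤ (K / N) * (-(Cδ * (lam₂ * S))) := le_trans h1 h3
      _ = -(K * Cδ * lam₂ / N) * S := by ring
  -- conclude
  have hLHS : ∑ i, (θ i / s) * f θ i = (∑ i, θ i * f θ i) / s := by
    rw [Finset.sum_div]
    exact Finset.sum_congr rfl fun i _ => div_mul_eq_mul_div _ _ _
  rw [hLHS, div_le_iff₀ hspos]
  calc ∑ i, θ i * f θ i ≤ -(K * Cδ * lam₂ / N) * S := hmain
    _ = -(K * Cδ * lam₂ / N) * (s * s) := by rw [hssq]
    _ = -(K * Cδ * lam₂ / N) * s * s := by ring
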